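/- Let Π be a convex set of stochastic policies, ν a probability distribution on states, ε ≥ 0, and π ∈ Π. Then π is an ε-local optimum of J_ν over Π (i.e., for all π' ∈ Π, lim_{α→0}(ν·v_{(1-α)π+απ'} - ν·v_π)/α ≤ ε) if and only if π ∈ G_Π(π, d_{ν,π}, (1-γ)ε), i.e., for all π'' ∈ Π, d_{ν,π}·T_π v_π + (1-γ)ε ≥ d_{ν,π}·T_{π''} v_π. -/

import Mathlib

open Matrix Filter Topology

section MDPdefs

variable {S A : Type*}

/-- `P` is a transition kernel: nonnegative and each row sums to one. -/
def IsKernel [Fintype S] (P : S → A → S → ℝ) : Prop :=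
  ∀ s a, (∀ s', 0 ≤ P s a s') ∧ ∑ s', P s a s' = 1

/-- A stochastic policy: a probability distribution over actions in each state. -/
def IsPolicy [Fintype A] (π : S → A → ℝ) : Prop :=
  ∀ s, (∀ a, 0 ≤ π s a) ∧ ∑ a, π s a = 1

/-- A probability distribution over states. -/
def IsDist [Fintype S] (μ : S → ℝ) : Prop :=
  (∀ s, 0 ≤ μ s) ∧ ∑ s, μ s = 1

/-- The reward vector `r_π(s) = ∑_a π(a|s) r(s,a)`. -/
def rPol [Fintype A] (r : S → A → ℝ) (π : S → A → ℝ) : S → ℝ :=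
  fun s => ∑ a, π s a * r s a

/-- The stochastic matrix `P_π(s,s') = ∑_a π(a|s) P(s'|s,a)`. -/
def PPol [Fintype A] (P : S → A → S → ℝ) (π : S → A → ℝ) : Matrix S S ℝ :=
  Matrix.of fun s s' => ∑ a, π s a * P s a s'

/-- The Bellman operator `T_π v = r_π + γ P_π v`. -/
noncomputable def bellman [Fintype S] [Fintype A] (P : S → A → S → ℝ) (r : S → A → ℝ)
    (γ : ℝ) (π : S → A → ℝ) (v : S → ℝ) : S → ℝ :=
  rPol r π + γ • (PPol P π *ᵥ v)

/-- The optimal Bellman operator `(Tv)(s) = max_a [r(s,a) + γ ∑_{s'} P(s'|s,a) v(s')]`. -/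
noncomputable def optBellman [Fintype S] [Fintype A] [Nonempty A] (P : S → A → S → ℝ)
    (r : S → A → ℝ) (γ : ℝ) (v : S → ℝ) : S → ℝ :=
  fun s => Finset.univ.sup' Finset.univ_nonempty fun a => r s a + γ * ∑ s', P s a s' * v s'

/-- The value function of policy `π`, `v_π = (I - γ P_π)⁻¹ r_π`, the unique solution of
`v = r_π + γ P_π v` when `0 ≤ γ < 1`. -/
noncomputable def valueFn [Fintype S] [Fintype A] [DecidableEq S] (P : S → A → S → ℝ)
    (r : S → A → ℝ) (γ : ℝ) (π : S → A → ℝ) : S → ℝ :=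
  ((1 : Matrix S S ℝ) - γ • PPol P π)⁻¹ *ᵥ rPol r π

/-- The γ-weighted occupancy measure `d_{μ,π} = (1-γ) μ (I - γ P_π)⁻¹` (a row vector). -/
noncomputable def occ [Fintype S] [Fintype A] [DecidableEq S] (P : S → A → S → ℝ)
    (γ : ℝ) (μ : S → ℝ) (π : S → A → ℝ) : S → ℝ :=
  (1 - γ) • (μ ᵥ* ((1 : Matrix S S ℝ) - γ • PPol P π)⁻¹)

/-- The stochastic mixture `(1-α)π + απ'`. -/
def mix (α : ℝ) (π π' : S → A → ℝ) : S → A → ℝ :=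
  fun s a => (1 - α) * π s a + α * π' s a

/-- The `ν`-greedy-complexity `E_ν(Π) = sup_{ρ∈Π} inf_{ρ'∈Π} d_{ν,ρ}·(T v_ρ - T_{ρ'} v_ρ)`. -/
noncomputable def greedyCplx [Fintype S] [Fintype A] [Nonempty A] [DecidableEq S]
    (P : S → A → S → ℝ) (r : S → A → ℝ) (γ : ℝ) (ν : S → ℝ)
    (Pol : Set (S → A → ℝ)) : ℝ :=
  ⨆ ρ : Pol, ⨅ ρ' : Pol,
    occ P γ ν (ρ : S → A → ℝ) ⬝ᵥ
      (optBellman P r γ (valueFn P r γ (ρ : S → A → ℝ)) -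
        bellman P r γ (ρ' : S → A → ℝ) (valueFn P r γ (ρ : S → A → ℝ)))

/-- `π` is an `ε`-local optimum of `J_ν` over `Pol`: for every `π' ∈ Pol`, the (one-sided)
limit of `(ν·v_{(1-α)π+απ'} - ν·v_π)/α` as `α → 0⁺` exists and is at most `ε`. -/
def IsLocalOpt [Fintype S] [Fintype A] [DecidableEq S]
    (P : S → A → S → ℝ) (r : S → A → ℝ) (γ : ℝ) (ν : S → ℝ)
    (Pol : Set (S → A → ℝ)) (π : S → A → ℝ) (ε : ℝ) : Prop :=
  ∀ π' ∈ Pol, ∃ L ≤ ε,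
    Tendsto (fun α : ℝ =>
        (ν ⬝ᵥ valueFn P r γ (mix α π π') - ν ⬝ᵥ valueFn P r γ π) / α)
      (𝓝[>] 0) (𝓝 L)

end MDPdefs

set_option linter.unusedSectionVars false


set_option linter.unusedSectionVars false

section aux
variable {S A : Type*} [Fintype S] [Fintype A] [DecidableEq S]

lemma PPol_nonneg {P : S → A → S → ℝ} (hP : IsKernel P) {π : S → A → ℝ} (hπ : IsPolicy π)
    (s s' : S) : 0 ≤ PPol P π s s' :=
  Finset.sum_nonneg fun a _ => mul_nonneg ((hπ s).1 a) ((hP s a).1 s')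

lemma PPol_row_sum {P : S → A → S → ℝ} (hP : IsKernel P) {π : S → A → ℝ} (hπ : IsPolicy π)
    (s : S) : ∑ s', PPol P π s s' = 1 := by
  have h : ∀ a : A, ∑ s', π s a * P s a s' = π s a := fun a => by
    rw [← Finset.mul_sum, (hP s a).2, mul_one]
  simp only [PPol, Matrix.of_apply]
  rw [Finset.sum_comm]
  simp_rw [h]
  exact (hπ s).2

lemma det_ne_zero [Nonempty S] {Q : Matrix S S ℝ} (hQ0 : ∀ s s', 0 ≤ Q s s')
    (hQ1 : ∀ s, ∑ s', Q s s' = 1) {γ : ℝ} (hγ0 : 0 ≤ γ) (hγ1 : γ < 1) :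
    ((1 : Matrix S S ℝ) - γ • Q).det ≠ 0 := by
  intro hdet
  obtain ⟨x, hx0, hx⟩ := (Matrix.exists_mulVec_eq_zero_iff).2 hdet
  rw [Matrix.sub_mulVec, Matrix.one_mulVec, Matrix.smul_mulVec, sub_eq_zero] at hx
  obtain ⟨s₀, -, hs₀⟩ := Finset.exists_max_image Finset.univ (fun s => |x s|) Finset.univ_nonempty
  have hpos : 0 < |x s₀| := by
    obtain ⟨t, ht⟩ := Function.ne_iff.1 hx0
    exact lt_of_lt_of_le (abs_pos.2 ht) (hs₀ t (Finset.mem_univ t))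
  have hsum : (Q *ᵥ x) s₀ = ∑ s', Q s₀ s' * x s' := by
    simp [Matrix.mulVec, dotProduct]
  have hle : |x s₀| ≤ γ * |x s₀| := by
    calc |x s₀| = γ * |(Q *ᵥ x) s₀| := by
          rw [congrFun hx s₀]; simp [abs_mul, abs_of_nonneg hγ0]
      _ ≤ γ * ∑ s', Q s₀ s' * |x s'| := by
          refine mul_le_mul_of_nonneg_left ?_ hγ0
          rw [hsum]
          refine (Finset.abs_sum_le_sum_abs _ _).trans (le_of_eq ?_)
          exact Finset.sum_congr rfl fun s' _ => by
            rw [abs_mul, abs_of_nonneg (hQ0 s₀ s')]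
      _ ≤ γ * ∑ s', Q s₀ s' * |x s₀| := by
          refine mul_le_mul_of_nonneg_left ?_ hγ0
          exact Finset.sum_le_sum fun s' _ =>
            mul_le_mul_of_nonneg_left (hs₀ s' (Finset.mem_univ s')) (hQ0 s₀ s')
      _ = γ * |x s₀| := by rw [← Finset.sum_mul, hQ1 s₀, one_mul]
  nlinarith

lemma isPolicy_mix {π π' : S → A → ℝ} (hπ : IsPolicy π) (hπ' : IsPolicy π')
    {α : ℝ} (h0 : 0 ≤ α) (h1 : α ≤ 1) : IsPolicy (mix α π π') := fun s =>
  ⟨fun a => add_nonneg (mul_nonneg (by linarith) ((hπ s).1 a)) (mul_nonneg h0 ((hπ' s).1 a)),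
   by simp only [mix, Finset.sum_add_distrib, ← Finset.mul_sum, (hπ s).2, (hπ' s).2]; ring⟩

lemma mix_zero (π π' : S → A → ℝ) : mix 0 π π' = π := by
  funext s a; simp [mix]

lemma M_mix (P : S → A → S → ℝ) (π π' : S → A → ℝ) (γ α : ℝ) :
    (1 : Matrix S S ℝ) - γ • PPol P (mix α π π')
      = ((1 : Matrix S S ℝ) - γ • PPol P π) - α • (γ • (PPol P π' - PPol P π)) := by
  ext s s'
  simp only [Matrix.sub_apply, Matrix.smul_apply, PPol, Matrix.of_apply, mix, smul_eq_mul]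
  have h : ∑ a, ((1-α)*π s a + α*π' s a)*P s a s'
       = (1-α) * (∑ a, π s a * P s a s') + α * (∑ a, π' s a * P s a s') := by
    rw [Finset.mul_sum, Finset.mul_sum, ← Finset.sum_add_distrib]
    exact Finset.sum_congr rfl fun a _ => by ring
  rw [h]; ring

lemma rPol_mix (r : S → A → ℝ) (π π' : S → A → ℝ) (α : ℝ) :
    rPol r (mix α π π') = rPol r π + α • (rPol r π' - rPol r π) := by
  funext s
  simp only [rPol, mix, Pi.add_apply, Pi.smul_apply, Pi.sub_apply, smul_eq_mul]
  have h : ∑ a, ((1-α)*π s a + α*π' s a)*r s a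
       = (1-α) * (∑ a, π s a * r s a) + α * (∑ a, π' s a * r s a) := by
    rw [Finset.mul_sum, Finset.mul_sum, ← Finset.sum_add_distrib]
    exact Finset.sum_congr rfl fun a _ => by ring
  rw [h]; ring

end aux

section key
variable {S A : Type*} [Fintype S] [Fintype A] [DecidableEq S]

lemma key_tendsto [Nonempty S]
    (P : S → A → S → ℝ) (hP : IsKernel P) (r : S → A → ℝ) {γ : ℝ}
    (hγ0 : 0 ≤ γ) (hγ1 : γ < 1)
    (ν : S → ℝ) {π π'' : S → A → ℝ} (hπp : IsPolicy π) (hπ''p : IsPolicy π'') :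
    Tendsto (fun α : ℝ =>
        (ν ⬝ᵥ valueFn P r γ (mix α π π'') - ν ⬝ᵥ valueFn P r γ π) / α)
      (𝓝[>] 0)
      (𝓝 ((1 - γ)⁻¹ * (occ P γ ν π ⬝ᵥ
        (bellman P r γ π'' (valueFn P r γ π) - bellman P r γ π (valueFn P r γ π))))) := by
  set v0 := valueFn P r γ π with hv0def
  set M0 : Matrix S S ℝ := 1 - γ • PPol P π with hM0
  set N : Matrix S S ℝ := γ • (PPol P π'' - PPol P π) with hN
  set w : S → ℝ := bellman P r γ π'' v0 - bellman P r γ π v0 with hwdef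
  have hdet0 : M0.det ≠ 0 := det_ne_zero (PPol_nonneg hP hπp) (PPol_row_sum hP hπp) hγ0 hγ1
  have hMα : ∀ α : ℝ, (1 : Matrix S S ℝ) - γ • PPol P (mix α π π'') = M0 - α • N :=
    fun α => M_mix P π π'' γ α
  have hMv : ∀ (ρ : S → A → ℝ), IsPolicy ρ →
      ((1 : Matrix S S ℝ) - γ • PPol P ρ) *ᵥ valueFn P r γ ρ = rPol r ρ := by
    intro ρ hρ
    have hd : (((1 : Matrix S S ℝ) - γ • PPol P ρ)).det ≠ 0 :=
      det_ne_zero (PPol_nonneg hP hρ) (PPol_row_sum hP hρ) hγ0 hγ1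
    rw [valueFn, Matrix.mulVec_mulVec, Matrix.mul_nonsing_inv _ (isUnit_iff_ne_zero.2 hd),
      Matrix.one_mulVec]
  have hM0v : M0 *ᵥ v0 = rPol r π := hMv π hπp
  set g : ℝ → ℝ := fun α => ν ⬝ᵥ ((M0 - α • N)⁻¹ *ᵥ w) with hg
  have hw : w = (rPol r π'' - rPol r π) + N *ᵥ v0 := by
    rw [hwdef, hN]
    simp only [bellman, Matrix.smul_mulVec, Matrix.sub_mulVec]
    module
  have heq : ∀ α ∈ Set.Ioc (0:ℝ) 1,
      (ν ⬝ᵥ valueFn P r γ (mix α π π'') - ν ⬝ᵥ v0) / α = g α := by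
    intro α hα
    have hmixpol : IsPolicy (mix α π π'') := isPolicy_mix hπp hπ''p hα.1.le hα.2
    have hdα : (M0 - α • N).det ≠ 0 := by
      rw [← hMα α]
      exact det_ne_zero (PPol_nonneg hP hmixpol) (PPol_row_sum hP hmixpol) hγ0 hγ1
    have hMαv : (M0 - α • N) *ᵥ valueFn P r γ (mix α π π'') = rPol r (mix α π π'') := by
      rw [← hMα α]; exact hMv _ hmixpol
    have h1 : (M0 - α • N) *ᵥ (valueFn P r γ (mix α π π'') - v0) = α • w := by
      rw [Matrix.mulVec_sub, hMαv, rPol_mix, Matrix.sub_mulVec, Matrix.smul_mulVec,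
        hM0v, hw]
      module
    have hdiff : valueFn P r γ (mix α π π'') - v0 = α • ((M0 - α • N)⁻¹ *ᵥ w) := by
      calc valueFn P r γ (mix α π π'') - v0
          = (M0 - α • N)⁻¹ *ᵥ ((M0 - α • N) *ᵥ (valueFn P r γ (mix α π π'') - v0)) := by
            rw [Matrix.mulVec_mulVec, Matrix.nonsing_inv_mul _ (isUnit_iff_ne_zero.2 hdα),
              Matrix.one_mulVec]
        _ = (M0 - α • N)⁻¹ *ᵥ (α • w) := by rw [h1]
        _ = α • ((M0 - α • N)⁻¹ *ᵥ w) := Matrix.mulVec_smul _ _ _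
    have h2 : ν ⬝ᵥ valueFn P r γ (mix α π π'') - ν ⬝ᵥ v0 = α * g α := by
      rw [← dotProduct_sub, hdiff, dotProduct_smul, smul_eq_mul]
    rw [h2, mul_div_cancel_left₀ _ (ne_of_gt hα.1)]
  have hMcont : Continuous (fun α : ℝ => M0 - α • N) :=
    continuous_const.sub (continuous_id.smul continuous_const)
  have hinv : ContinuousAt (fun α : ℝ => (M0 - α • N)⁻¹) 0 := by
    have hcinv : ContinuousAt Inv.inv (M0 - (0:ℝ) • N) := by
      rw [show M0 - (0:ℝ) • N = M0 by simp]
      apply continuousAt_matrix_inv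
      rw [Ring.inverse_eq_inv']
      exact continuousAt_inv₀ hdet0
    have h := ContinuousAt.comp (f := fun α : ℝ => M0 - α • N) hcinv hMcont.continuousAt
    exact h
  have hgcont : ContinuousAt g 0 := by
    have houter : Continuous (fun B : Matrix S S ℝ => ν ⬝ᵥ (B *ᵥ w)) :=
      continuous_const.dotProduct (continuous_id.matrix_mulVec continuous_const)
    exact houter.continuousAt.comp hinv
  have hg0 : g 0 = (1-γ)⁻¹ * (occ P γ ν π ⬝ᵥ w) := by
    have hγ' : (1:ℝ) - γ ≠ 0 := by linarith
    simp only [hg, zero_smul, sub_zero]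
    rw [Matrix.dotProduct_mulVec, occ, ← hM0, smul_dotProduct, smul_eq_mul]
    field_simp
  have htd : Tendsto g (𝓝[>] (0:ℝ)) (𝓝 ((1-γ)⁻¹ * (occ P γ ν π ⬝ᵥ w))) := by
    rw [← hg0]
    exact hgcont.tendsto.mono_left nhdsWithin_le_nhds
  have hev : g =ᶠ[𝓝[>] (0:ℝ)]
      (fun α => (ν ⬝ᵥ valueFn P r γ (mix α π π'') - ν ⬝ᵥ v0) / α) := by
    filter_upwards [Ioc_mem_nhdsGT_of_mem (Set.mem_Ico.2 ⟨le_refl 0, one_pos⟩)] with α hα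
    exact (heq α hα).symm
  exact Tendsto.congr' hev htd

end key

/-- `π ∈ Π` is an `ε`-local optimum of `J_ν` over a convex `Π`
iff `π ∈ G_Π(π, d_{ν,π}, (1-γ)ε)`. -/
theorem stmt_2 {S A : Type*} [Fintype S] [Fintype A] [Nonempty S] [Nonempty A] [DecidableEq S]
    (P : S → A → S → ℝ) (hP : IsKernel P) (r : S → A → ℝ) (γ : ℝ)
    (hγ0 : 0 ≤ γ) (hγ1 : γ < 1)
    (Pol : Set (S → A → ℝ)) (hPol : ∀ ρ ∈ Pol, IsPolicy ρ)
    (hconv : ∀ ρ ∈ Pol, ∀ ρ' ∈ Pol, ∀ α : ℝ, 0 ≤ α → α ≤ 1 → mix α ρ ρ' ∈ Pol)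
    (ν : S → ℝ) (hν : IsDist ν) (ε : ℝ) (hε : 0 ≤ ε)
    (π : S → A → ℝ) (hπ : π ∈ Pol) :
    IsLocalOpt P r γ ν Pol π ε ↔
      ∀ π'' ∈ Pol,
        occ P γ ν π ⬝ᵥ bellman P r γ π'' (valueFn P r γ π)
          ≤ occ P γ ν π ⬝ᵥ bellman P r γ π (valueFn P r γ π) + (1 - γ) * ε := by
  have hγ' : (0:ℝ) < 1 - γ := by linarith
  constructor
  · intro hopt π'' hπ''
    obtain ⟨L, hLε, hL⟩ := hopt π'' hπ''
    have hkey := key_tendsto P hP r hγ0 hγ1 ν (hPol π hπ) (hPol π'' hπ'')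
    have hLeq := tendsto_nhds_unique hL hkey
    rw [dotProduct_sub] at hLeq
    rw [hLeq] at hLε
    have h2 : occ P γ ν π ⬝ᵥ bellman P r γ π'' (valueFn P r γ π)
        - occ P γ ν π ⬝ᵥ bellman P r γ π (valueFn P r γ π) ≤ (1-γ)*ε := by
      have h3 := mul_le_mul_of_nonneg_left hLε hγ'.le
      rwa [← mul_assoc, mul_inv_cancel₀ hγ'.ne', one_mul] at h3
    linarith
  · intro hgr π' hπ'
    refine ⟨_, ?_, key_tendsto P hP r hγ0 hγ1 ν (hPol π hπ) (hPol π' hπ')⟩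
    rw [dotProduct_sub]
    have h := hgr π' hπ'
    have h2 : occ P γ ν π ⬝ᵥ bellman P r γ π' (valueFn P r γ π)
        - occ P γ ν π ⬝ᵥ bellman P r γ π (valueFn P r γ π) ≤ (1-γ)*ε := by linarith
    calc (1-γ)⁻¹ * (occ P γ ν π ⬝ᵥ bellman P r γ π' (valueFn P r γ π)
          - occ P γ ν π ⬝ᵥ bellman P r γ π (valueFn P r γ π))
        ≤ (1-γ)⁻¹ * ((1-γ)*ε) := mul_le_mul_of_nonneg_left h2 (inv_nonneg.2 hγ'.le)
      _ = ε := by field_simp
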